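/- Let R be a torsion-free commutative ring over which the additive formal group law F(x,y) = x + y and the multiplicative formal group law G(x,y) = x + y + xy are isomorphic (i.e., there is a power series f(t) = t + a₂t² + ⋯ with coefficients in R satisfying f(F(x,y)) = G(f(x), f(y))). Then R is a ℚ-algebra, i.e., every positive integer is invertible in R. -/

import Mathlib

/-- Let `R` be a torsion-free commutative ring over which the additive formal
group law `F(x,y) = x + y` and the multiplicative formal group law `G(x,y) = x + y + xy` are
strictly isomorphic: there is a power series `f(t) = Σₙ aₙ tⁿ` with `a 0 = 0`, `a 1 = 1` and
`f(F(x,y)) = G(f(x), f(y))` as power series in two variables.  Then `R` is a ℚ-algebra, i.e.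
every positive integer is invertible in `R`.

Here `fx = f(x)`, `fy = f(y)` and `fxy = f(x + y)` are specified in `R⟦x,y⟧ =
MvPowerSeries (Fin 2) R` by their coefficients; the coefficient of `x^i y^j` in `f(x+y)`
is `C(i+j, i) · a (i+j)` by the binomial theorem, since `f(x+y) = Σₙ aₙ (x+y)ⁿ`. -/
theorem torsionFree_add_iso_mul_fgl_isQAlgebra
    (R : Type*) [CommRing R]
    (htf : ∀ (n : ℕ) (r : R), 0 < n → n • r = 0 → r = 0)
    (a : ℕ → R) (h0 : a 0 = 0) (h1 : a 1 = 1)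
    (fx fy fxy : MvPowerSeries (Fin 2) R)
    (hfx : ∀ d : Fin 2 →₀ ℕ,
      MvPowerSeries.coeff d fx = if d 1 = 0 then a (d 0) else 0)
    (hfy : ∀ d : Fin 2 →₀ ℕ,
      MvPowerSeries.coeff d fy = if d 0 = 0 then a (d 1) else 0)
    (hfxy : ∀ d : Fin 2 →₀ ℕ,
      MvPowerSeries.coeff d fxy = (Nat.choose (d 0 + d 1) (d 0) : R) * a (d 0 + d 1))
    (hiso : fxy = fx + fy + fx * fy) :
    ∀ n : ℕ, 0 < n → IsUnit (n : R) := by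
  have key : ∀ n : ℕ, ((n + 2 : ℕ) : R) * a (n + 2) = a (n + 1) := by
    intro n
    set d : Fin 2 →₀ ℕ := Finsupp.single 0 (n + 1) + Finsupp.single 1 1 with hd
    have hd0 : d 0 = n + 1 := by simp [hd, Finsupp.single_apply]
    have hd1 : d 1 = 1 := by simp [hd, Finsupp.single_apply]
    have h := congrArg (MvPowerSeries.coeff d) hiso
    rw [map_add, map_add, hfxy, hfx, hfy, hd0, hd1] at h
    simp only [if_neg (Nat.succ_ne_zero n), if_neg one_ne_zero] at h
    have hmul : MvPowerSeries.coeff d (fx * fy) = a (n + 1) := by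
      rw [MvPowerSeries.coeff_mul]
      rw [Finset.sum_eq_single (Finsupp.single 0 (n + 1), Finsupp.single 1 1)]
      · rw [hfx, hfy]
        simp [Finsupp.single_apply, h1]
      · rintro ⟨p, q⟩ hmem hne
        rw [Finset.HasAntidiagonal.mem_antidiagonal] at hmem
        rw [hfx, hfy]
        by_cases hp1 : p 1 = 0
        · by_cases hq0 : q 0 = 0
          · exfalso
            apply hne
            have hsum0 : p 0 + q 0 = n + 1 := by
              have := DFunLike.congr_fun hmem (0 : Fin 2)
              simpa [hd0] using this
            have hsum1 : p 1 + q 1 = 1 := by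
              have := DFunLike.congr_fun hmem (1 : Fin 2)
              simpa [hd1] using this
            have hp0 : p 0 = n + 1 := by omega
            have hq1 : q 1 = 1 := by omega
            refine Prod.ext ?_ ?_
            · ext j
              fin_cases j <;> simp [hp0, hp1, Finsupp.single_apply]
            · ext j
              fin_cases j <;> simp [hq0, hq1, Finsupp.single_apply]
          · simp [hq0]
        · simp [hp1]
      · intro hm
        exfalso
        apply hm
        rw [Finset.HasAntidiagonal.mem_antidiagonal, hd]
    rw [hmul] at h
    have hch : Nat.choose (n + 1 + 1) (n + 1) = n + 2 := by
      simp [Nat.choose_succ_self_right]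
    rw [hch] at h
    linear_combination h
  have fact : ∀ n : ℕ, ((n + 1).factorial : R) * a (n + 1) = 1 := by
    intro n
    induction n with
    | zero => simpa using h1
    | succ k ih =>
      have : ((k + 2).factorial : R) = ((k + 1).factorial : R) * ((k + 2 : ℕ) : R) := by
        push_cast [Nat.factorial_succ]; ring
      rw [this, mul_assoc, key k, ih]
  intro n hn
  obtain ⟨m, rfl⟩ := Nat.exists_eq_succ_of_ne_zero hn.ne'
  have := fact m
  have h2 : ((m + 1 : ℕ) : R) * (((m).factorial : R) * a (m + 1)) = 1 := by
    rw [← mul_assoc, ← Nat.cast_mul]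
    rw [show (m + 1) * m.factorial = (m + 1).factorial from rfl]
    exact this
  exact IsUnit.of_mul_eq_one _ h2
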